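/- For finite simple graphs G and H, the number of induced paths P₃ (3-vertex subsets inducing exactly 2 edges) in inflate(G,H) equals |G|·P(H) + 2·e(G)·(C(|H|,2) − e(H))·|H| + P(G)·|H|³, where P(X) denotes the number of 3-vertex subsets of X inducing exactly two edges. -/

import Mathlib

open scoped Classical

/-- The inflation (lexicographic product) of `G` with `H`: vertex set `α × β`,
with `(g₁,h₁) ~ (g₂,h₂)` iff `g₁ ~ g₂` in `G`, or `g₁ = g₂` and `h₁ ~ h₂` in `H`. -/
def inflate {α β : Type*} (G : SimpleGraph α) (H : SimpleGraph β) :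
    SimpleGraph (α × β) where
  Adj p q := G.Adj p.1 q.1 ∨ (p.1 = q.1 ∧ H.Adj p.2 q.2)
  symm := by
    constructor
    rintro p q (h | ⟨h1, h2⟩)
    · exact Or.inl h.symm
    · exact Or.inr ⟨h1.symm, h2.symm⟩
  loopless := by
    constructor
    rintro p (h | ⟨-, h⟩)
    · exact G.irrefl h
    · exact H.irrefl h

/-- The number of edges of a graph. -/
noncomputable def edgeCount {V : Type*} (G : SimpleGraph V) : ℕ :=
  Nat.card G.edgeSet

/-- Twice the number of edges of `G` inside the vertex subset `s`
(counting ordered adjacent pairs). -/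
noncomputable def edgePairsIn {V : Type*} [Fintype V] (G : SimpleGraph V)
    (s : Finset V) : ℕ :=
  ((s ×ˢ s).filter fun p => G.Adj p.1 p.2).card

/-- The number of 3-element vertex subsets of `G` whose induced subgraph has
exactly `j` edges. -/
noncomputable def tripleCount {V : Type*} [Fintype V] (G : SimpleGraph V) (j : ℕ) : ℕ :=
  ((Finset.powersetCard 3 (Finset.univ : Finset V)).filter
    fun s => edgePairsIn G s = 2 * j).card

lemma inflate_adj {α β : Type*} {G : SimpleGraph α} {H : SimpleGraph β} {p q : α × β} :
    (inflate G H).Adj p q ↔ G.Adj p.1 q.1 ∨ (p.1 = q.1 ∧ H.Adj p.2 q.2) := Iff.rfl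

/-- Ordered induced-P₃ triples. -/
noncomputable def P3set {V : Type*} [Fintype V] (X : SimpleGraph V) : Finset (V × V × V) :=
  Finset.univ.filter fun t =>
    X.Adj t.1 t.2.1 ∧ X.Adj t.2.1 t.2.2 ∧ ¬X.Adj t.1 t.2.2 ∧ t.1 ≠ t.2.2

lemma mem_P3set {V : Type*} [Fintype V] {X : SimpleGraph V} {t : V × V × V} :
    t ∈ P3set X ↔
      X.Adj t.1 t.2.1 ∧ X.Adj t.2.1 t.2.2 ∧ ¬X.Adj t.1 t.2.2 ∧ t.1 ≠ t.2.2 := by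
  simp [P3set]

lemma edgePairsIn_triple {V : Type*} [Fintype V] (X : SimpleGraph V) {a b c : V}
    (hab : a ≠ b) (hac : a ≠ c) (hbc : b ≠ c) :
    edgePairsIn X {a, b, c} =
      (if X.Adj a b then 2 else 0) + (if X.Adj b c then 2 else 0) +
        (if X.Adj a c then 2 else 0) := by
  have e1 : ∀ f : V → ℕ, ∑ y ∈ ({a, b, c} : Finset V), f y = f a + (f b + f c) := by
    intro f
    rw [show ({a, b, c} : Finset V) = insert a (insert b {c}) from rfl,
      Finset.sum_insert (by simp [hab, hac]), Finset.sum_insert (by simp [hbc]),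
      Finset.sum_singleton]
  rw [edgePairsIn, Finset.card_filter, Finset.sum_product, e1, e1, e1, e1]
  simp only [SimpleGraph.irrefl, if_false]
  simp only [X.adj_comm b a, X.adj_comm c a, X.adj_comm c b]
  split_ifs <;> omega

lemma fiber_eq {V : Type*} [Fintype V] (X : SimpleGraph V) {a b c : V}
    (hac : a ≠ c) (h1 : X.Adj a b) (h2 : X.Adj b c) (h3 : ¬X.Adj a c) :
    ((P3set X).filter fun t => ({t.1, t.2.1, t.2.2} : Finset V) = {a, b, c}) =
      {(a, b, c), (c, b, a)} := by
  have h1s := h1.symm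
  have h2s := h2.symm
  have h3s : ¬X.Adj c a := fun h => h3 h.symm
  ext ⟨x, y, z⟩
  simp only [Finset.mem_filter, mem_P3set, Finset.mem_insert, Finset.mem_singleton,
    Prod.mk.injEq]
  constructor
  · rintro ⟨⟨hxy, hyz, hxz, hxz'⟩, hs⟩
    have hx : x = a ∨ x = b ∨ x = c := by
      have : x ∈ ({a, b, c} : Finset V) := hs ▸ (by simp)
      simpa using this
    have hy : y = a ∨ y = b ∨ y = c := by
      have : y ∈ ({a, b, c} : Finset V) := hs ▸ (by simp)
      simpa using this
    have hz : z = a ∨ z = b ∨ z = c := by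
      have : z ∈ ({a, b, c} : Finset V) := hs ▸ (by simp)
      simpa using this
    rcases hx with rfl | rfl | rfl <;> rcases hy with rfl | rfl | rfl <;>
      rcases hz with rfl | rfl | rfl <;> simp_all
  · rintro (⟨rfl, rfl, rfl⟩ | ⟨rfl, rfl, rfl⟩)
    · exact ⟨⟨h1, h2, h3, hac⟩, rfl⟩
    · refine ⟨⟨h2s, h1s, h3s, hac.symm⟩, ?_⟩
      ext w; simp; tauto

lemma P3set_card {V : Type*} [Fintype V] (X : SimpleGraph V) :
    (P3set X).card = 2 * tripleCount X 2 := by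
  classical
  rw [tripleCount]
  rw [Finset.card_eq_sum_card_fiberwise
    (f := fun t : V × V × V => ({t.1, t.2.1, t.2.2} : Finset V))
    (t := (Finset.powersetCard 3 (Finset.univ : Finset V)).filter
      fun s => edgePairsIn X s = 2 * 2)
    (fun t ht => by
      rw [Finset.mem_coe, mem_P3set] at ht
      obtain ⟨h1, h2, h3, h4⟩ := ht
      rw [Finset.mem_coe, Finset.mem_filter, Finset.mem_powersetCard]
      refine ⟨⟨Finset.subset_univ _, ?_⟩, ?_⟩
      · exact Finset.card_eq_three.mpr ⟨_, _, _, h1.ne, h4, h2.ne, rfl⟩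
      · rw [edgePairsIn_triple X h1.ne h4 h2.ne, if_pos h1, if_pos h2, if_neg h3])]
  rw [Finset.sum_congr rfl (fun s hs => ?_), Finset.sum_const, smul_eq_mul, Nat.mul_comm]
  rw [Finset.mem_filter, Finset.mem_powersetCard] at hs
  obtain ⟨⟨-, hcard⟩, hpairs⟩ := hs
  obtain ⟨a, b, c, hab, hac, hbc, rfl⟩ := Finset.card_eq_three.mp hcard
  rw [edgePairsIn_triple X hab hac hbc] at hpairs
  have pair_card : ∀ x y z w : V, x ≠ z →
      ({(x, y, z), (z, w, x)} : Finset (V × V × V)).card = 2 := by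
    intro x y z w hxz
    rw [Finset.card_insert_of_notMem (by simp [hxz]), Finset.card_singleton]
  by_cases e1 : X.Adj a b <;> by_cases e2 : X.Adj b c <;> by_cases e3 : X.Adj a c <;>
    simp only [e1, e2, e3, if_true, if_false, if_pos, if_neg] at hpairs <;>
    try omega
  · -- edges ab, bc
    rw [fiber_eq X hac e1 e2 e3, pair_card a b c b hac]
  · -- edges ab, ac : middle a, path b - a - c
    have hset : ({a, b, c} : Finset V) = {b, a, c} := by ext w; simp; tauto
    rw [hset, fiber_eq X hbc e1.symm e3 (fun h => e2 h), pair_card b a c a hbc]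
  · -- edges bc, ac : middle c, path a - c - b
    have hset : ({a, b, c} : Finset V) = {a, c, b} := by ext w; simp; tauto
    rw [hset, fiber_eq X hab e3 e2.symm (fun h => e1 h), pair_card a c b c hab]

lemma adjPairs_card {V : Type*} [Fintype V] (X : SimpleGraph V) :
    ((Finset.univ : Finset (V × V)).filter fun p => X.Adj p.1 p.2).card = 2 * edgeCount X := by
  classical
  have := X.two_mul_card_edgeFinset
  rw [edgeCount, Nat.card_eq_fintype_card, ← SimpleGraph.edgeFinset_card]
  rw [this]

lemma compl_edgeCount {V : Type*} [Fintype V] (X : SimpleGraph V) :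
    edgeCount Xᶜ = (Fintype.card V).choose 2 - edgeCount X := by
  classical
  have hcard : ∀ (Y : SimpleGraph V) (i : Fintype Y.edgeSet),
      (@SimpleGraph.edgeFinset V Y i).card = edgeCount Y := by
    intro Y i
    rw [edgeCount, @SimpleGraph.edgeFinset_card V Y i]
    exact (@Nat.card_eq_fintype_card _ i).symm
  have hdisj : Disjoint X.edgeFinset Xᶜ.edgeFinset :=
    SimpleGraph.disjoint_edgeFinset.mpr disjoint_compl_right
  have htop : X ⊔ Xᶜ = ⊤ := sup_compl_eq_top
  have hsets : X.edgeSet ∪ Xᶜ.edgeSet = (⊤ : SimpleGraph V).edgeSet := by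
    rw [← SimpleGraph.edgeSet_sup, htop]
  have hunion : X.edgeFinset ∪ Xᶜ.edgeFinset = (⊤ : SimpleGraph V).edgeFinset := by
    ext e
    simp only [Finset.mem_union, SimpleGraph.mem_edgeFinset]
    rw [← Set.mem_union, hsets]
  have : X.edgeFinset.card + Xᶜ.edgeFinset.card = (Fintype.card V).choose 2 := by
    rw [← Finset.card_union_of_disjoint hdisj, hunion,
      SimpleGraph.card_edgeFinset_top_eq_card_choose_two]
  rw [hcard, hcard] at this
  omega

/-- The number of induced paths `P₃` in `inflate G H` is
`|G|·P(H) + 2·e(G)·(C(|H|,2) − e(H))·|H| + P(G)·|H|³`. -/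
theorem stmt12 {α β : Type*} [Fintype α] [Fintype β]
    (G : SimpleGraph α) (H : SimpleGraph β) :
    tripleCount (inflate G H) 2 =
      Fintype.card α * tripleCount H 2 +
        2 * edgeCount G * ((Fintype.card β).choose 2 - edgeCount H) * Fintype.card β +
        tripleCount G 2 * (Fintype.card β) ^ 3 := by
  classical
  set A := P3set (inflate G H) with hA
  -- split by first-coordinate pattern
  have hsplit : A.card = (A.filter fun t => t.1.1 = t.2.1.1).card +
      ((A.filter fun t => ¬t.1.1 = t.2.1.1).filter fun t => t.1.1 = t.2.2.1).card +
      ((A.filter fun t => ¬t.1.1 = t.2.1.1).filter fun t => ¬t.1.1 = t.2.2.1).card := by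
    rw [← Finset.card_filter_add_card_filter_not (s := A) (fun t => t.1.1 = t.2.1.1),
      ← Finset.card_filter_add_card_filter_not
        (s := A.filter fun t => ¬t.1.1 = t.2.1.1) (fun t => t.1.1 = t.2.2.1)]
    omega
  -- Case 1: all first coordinates equal
  have hc1 : (A.filter fun t => t.1.1 = t.2.1.1).card =
      Fintype.card α * (P3set H).card := by
    rw [← Finset.card_univ, ← Finset.card_product]
    apply Finset.card_nbij' (i := fun t => (t.1.1, (t.1.2, t.2.1.2, t.2.2.2)))
      (j := fun p => ((p.1, p.2.1), (p.1, p.2.2.1), (p.1, p.2.2.2)))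
    · rintro ⟨⟨g₁, h₁⟩, ⟨g₂, h₂⟩, ⟨g₃, h₃⟩⟩ ht
      rw [Finset.mem_coe, Finset.mem_filter, hA, mem_P3set] at ht
      obtain ⟨⟨a12, a23, na13, hne⟩, h12⟩ := ht
      simp only at h12; subst h12
      have h13 : g₁ = g₃ := by
        by_contra hne'
        rcases a23 with hG | ⟨he, -⟩
        · exact na13 (Or.inl hG)
        · exact hne' he
      subst h13
      rcases a12 with hG | ⟨-, hH12⟩
      · exact absurd hG (G.irrefl)
      rcases a23 with hG | ⟨-, hH23⟩
      · exact absurd hG (G.irrefl)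
      have nH13 : ¬H.Adj h₁ h₃ := fun h => na13 (Or.inr ⟨rfl, h⟩)
      have hne' : h₁ ≠ h₃ := fun h => hne (by simp [h])
      simp only [Finset.mem_coe, Finset.mem_product, Finset.mem_univ, true_and, mem_P3set]
      exact ⟨hH12, hH23, nH13, hne'⟩
    · rintro ⟨g, h₁, h₂, h₃⟩ hp
      simp only [Finset.mem_coe, Finset.mem_product, Finset.mem_univ, true_and, mem_P3set] at hp
      obtain ⟨a12, a23, na13, hne⟩ := hp
      rw [Finset.mem_coe, Finset.mem_filter, hA, mem_P3set]
      refine ⟨⟨Or.inr ⟨rfl, a12⟩, Or.inr ⟨rfl, a23⟩, ?_, ?_⟩, rfl⟩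
      · rintro (hG | ⟨-, hH⟩)
        · exact G.irrefl hG
        · exact na13 hH
      · simp [hne]
    · rintro ⟨⟨g₁, h₁⟩, ⟨g₂, h₂⟩, ⟨g₃, h₃⟩⟩ ht
      rw [Finset.mem_coe, Finset.mem_filter, hA, mem_P3set] at ht
      obtain ⟨⟨a12, a23, na13, hne⟩, h12⟩ := ht
      simp only at h12; subst h12
      have h13 : g₁ = g₃ := by
        by_contra hne'
        rcases a23 with hG | ⟨he, -⟩
        · exact na13 (Or.inl hG)
        · exact hne' he
      subst h13
      rfl
    · rintro ⟨g, h₁, h₂, h₃⟩ _; rfl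
  -- Case 2: g₁ = g₃ ≠ g₂
  have hc2 : ((A.filter fun t => ¬t.1.1 = t.2.1.1).filter fun t => t.1.1 = t.2.2.1).card =
      (2 * edgeCount G) * ((2 * ((Fintype.card β).choose 2 - edgeCount H)) *
        Fintype.card β) := by
    rw [← adjPairs_card G, ← compl_edgeCount H, ← adjPairs_card Hᶜ, ← Finset.card_univ (α := β),
      ← Finset.card_product, ← Finset.card_product]
    apply Finset.card_nbij' (i := fun t => ((t.1.1, t.2.1.1), ((t.1.2, t.2.2.2), t.2.1.2)))
      (j := fun p => ((p.1.1, p.2.1.1), (p.1.2, p.2.2), (p.1.1, p.2.1.2)))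
    · rintro ⟨⟨g₁, h₁⟩, ⟨g₂, h₂⟩, ⟨g₃, h₃⟩⟩ ht
      rw [Finset.mem_coe, Finset.mem_filter, Finset.mem_filter, hA, mem_P3set] at ht
      obtain ⟨⟨⟨a12, a23, na13, hne⟩, h12⟩, h13⟩ := ht
      simp only at h12 h13; subst h13
      have hG12 : G.Adj g₁ g₂ := by
        rcases a12 with hG | ⟨he, -⟩
        · exact hG
        · exact absurd he h12
      have nH13 : ¬H.Adj h₁ h₃ := fun h => na13 (Or.inr ⟨rfl, h⟩)
      have hne' : h₁ ≠ h₃ := fun h => hne (by simp [h])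
      simp only [Finset.mem_coe, Finset.mem_product, Finset.mem_filter, Finset.mem_univ, true_and,
        SimpleGraph.compl_adj]
      exact ⟨hG12, ⟨hne', nH13⟩, trivial⟩
    · rintro ⟨⟨g₁, g₂⟩, ⟨h₁, h₃⟩, h₂⟩ hp
      simp only [Finset.mem_coe, Finset.mem_product, Finset.mem_filter, Finset.mem_univ, true_and,
        SimpleGraph.compl_adj] at hp
      obtain ⟨hG12, ⟨hne', nH13⟩, -⟩ := hp
      rw [Finset.mem_coe, Finset.mem_filter, Finset.mem_filter, hA, mem_P3set]
      refine ⟨⟨⟨Or.inl hG12, Or.inl hG12.symm, ?_, ?_⟩, hG12.ne⟩, rfl⟩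
      · rintro (hG | ⟨-, hH⟩)
        · exact G.irrefl hG
        · exact nH13 hH
      · simp [hne']
    · rintro ⟨⟨g₁, h₁⟩, ⟨g₂, h₂⟩, ⟨g₃, h₃⟩⟩ ht
      rw [Finset.mem_coe, Finset.mem_filter, Finset.mem_filter, hA, mem_P3set] at ht
      obtain ⟨⟨⟨a12, a23, na13, hne⟩, h12⟩, h13⟩ := ht
      simp only at h13; subst h13
      rfl
    · rintro ⟨⟨g₁, g₂⟩, ⟨h₁, h₃⟩, h₂⟩ _; rfl
  -- Case 3: all first coordinates distinct
  have hc3 : ((A.filter fun t => ¬t.1.1 = t.2.1.1).filter fun t => ¬t.1.1 = t.2.2.1).card =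
      (P3set G).card * (Fintype.card (β × β × β)) := by
    rw [← Finset.card_univ, ← Finset.card_product]
    apply Finset.card_nbij' (i := fun t => ((t.1.1, t.2.1.1, t.2.2.1), (t.1.2, t.2.1.2, t.2.2.2)))
      (j := fun p => ((p.1.1, p.2.1), (p.1.2.1, p.2.2.1), (p.1.2.2, p.2.2.2)))
    · rintro ⟨⟨g₁, h₁⟩, ⟨g₂, h₂⟩, ⟨g₃, h₃⟩⟩ ht
      rw [Finset.mem_coe, Finset.mem_filter, Finset.mem_filter, hA, mem_P3set] at ht
      obtain ⟨⟨⟨a12, a23, na13, hne⟩, h12⟩, h13⟩ := ht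
      simp only at a12 a23 na13 hne h12 h13
      have hG12 : G.Adj g₁ g₂ := by
        rcases a12 with hG | ⟨he, -⟩
        · exact hG
        · exact absurd he h12
      have nG13 : ¬G.Adj g₁ g₃ := fun h => na13 (Or.inl h)
      have hG23 : G.Adj g₂ g₃ := by
        rcases a23 with hG | ⟨he, -⟩
        · exact hG
        · have he' : g₂ = g₃ := he
          exact absurd (he' ▸ hG12) nG13
      simp only [Finset.mem_coe, Finset.mem_product, Finset.mem_univ, true_and, and_true, mem_P3set]
      exact ⟨hG12, hG23, nG13, h13⟩
    · rintro ⟨⟨g₁, g₂, g₃⟩, ⟨h₁, h₂, h₃⟩⟩ hp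
      simp only [Finset.mem_coe, Finset.mem_product, Finset.mem_univ, true_and, and_true, mem_P3set] at hp
      obtain ⟨hG12, hG23, nG13, h13⟩ := hp
      rw [Finset.mem_coe, Finset.mem_filter, Finset.mem_filter, hA, mem_P3set]
      refine ⟨⟨⟨Or.inl hG12, Or.inl hG23, ?_, ?_⟩, hG12.ne⟩, h13⟩
      · rintro (hG | ⟨he, -⟩)
        · exact nG13 hG
        · exact h13 he
      · simp only [ne_eq, Prod.mk.injEq, not_and]
        intro h; exact absurd h h13
    · rintro ⟨⟨g₁, h₁⟩, ⟨g₂, h₂⟩, ⟨g₃, h₃⟩⟩ _; rfl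
    · rintro ⟨⟨g₁, g₂, g₃⟩, ⟨h₁, h₂, h₃⟩⟩ _; rfl
  have key : A.card = Fintype.card α * (P3set H).card +
      (2 * edgeCount G) * ((2 * ((Fintype.card β).choose 2 - edgeCount H)) * Fintype.card β) +
      (P3set G).card * (Fintype.card (β × β × β)) := by
    rw [hsplit, hc1, hc2, hc3]
  rw [hA, P3set_card, P3set_card, P3set_card, Fintype.card_prod, Fintype.card_prod] at key
  apply Nat.eq_of_mul_eq_mul_left (show 0 < 2 by norm_num)
  rw [key]; ring
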